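/- Let G be a finite group, Q a p-subgroup of G, and k a field of characteristic p. The Brauer map br_Q : (kG)^Q → kC_G(Q), sending a fixed element a = Σ_g α_g g to Σ_{g ∈ C_G(Q)} α_g g, is a surjective homomorphism of k-algebras; in particular br_Q(aa') = br_Q(a)br_Q(a') for all a, a' ∈ (kG)^Q. -/

import Mathlib

open Finset MulAction

/-- Sum over a stable set of non-fixed points of an invariant function vanishes in char p. -/
lemma aux_sum_zero (p : ℕ) [Fact p.Prime] {k : Type*} [Field k] [CharP k p]
    {Q : Type*} [Group Q] [Fintype Q] (hQ : IsPGroup p Q)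
    {X : Type*} [Fintype X] [DecidableEq X] [MulAction Q X] (f : X → k)
    (hf : ∀ (q : Q) (x : X), f (q • x) = f x)
    (s : Finset X) (hfix : ∀ x ∈ s, x ∉ MulAction.fixedPoints Q X)
    (hstab : ∀ (q : Q), ∀ x ∈ s, q • x ∈ s) :
    ∑ x ∈ s, f x = 0 := by
  classical
  induction s using Finset.strongInduction with
  | _ s ih =>
    rcases s.eq_empty_or_nonempty with rfl | ⟨x, hx⟩
    · simp
    · set O : Finset X := Finset.image (fun q : Q => q • x) Finset.univ with hO
      have hxO : x ∈ O := by
        refine Finset.mem_image.2 ⟨1, Finset.mem_univ _, one_smul _ _⟩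
      have hOs : O ⊆ s := by
        intro y hy
        rcases Finset.mem_image.1 hy with ⟨q, -, rfl⟩
        exact hstab q x hx
      have hOss : s \ O ⊂ s := Finset.sdiff_ssubset hOs ⟨x, hxO⟩
      have hsum : ∑ y ∈ s, f y = ∑ y ∈ s \ O, f y + ∑ y ∈ O, f y :=
        (Finset.sum_sdiff hOs).symm
      -- sum over orbit is zero
      have hOcard : O.card = Fintype.card (MulAction.orbit Q x) := by
        have : O = (MulAction.orbit Q x).toFinset := by
          ext y
          rw [Set.mem_toFinset]
          simp [hO, MulAction.orbit, eq_comm]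
        rw [this, Set.toFinset_card]
      have hpd : p ∣ O.card := by
        obtain ⟨n, hn⟩ := IsPGroup.iff_card.mp hQ
        have hdvd : O.card ∣ p ^ n := by
          rw [hOcard, ← hn]
          have := MulAction.card_orbit_mul_card_stabilizer_eq_card_group Q x
          rw [Nat.card_eq_fintype_card] at *
          exact ⟨_, this.symm⟩
        have hone : O.card ≠ 1 := by
          intro h1
          apply hfix x hx
          intro q
          have : q • x ∈ O := Finset.mem_image.2 ⟨q, Finset.mem_univ _, rfl⟩
          have := Finset.card_le_one.1 (le_of_eq h1) _ this _ hxO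
          exact this
        rcases (Nat.dvd_prime_pow (Fact.out : p.Prime)).1 hdvd with ⟨m, hm, hc⟩
        rw [hc]
        cases m with
        | zero => rw [hc] at hone; simp at hone
        | succ m => exact dvd_pow_self p (Nat.succ_ne_zero m)
      have hOsum : ∑ y ∈ O, f y = 0 := by
        have hconst : ∀ y ∈ O, f y = f x := by
          intro y hy
          rcases Finset.mem_image.1 hy with ⟨q, -, rfl⟩
          exact hf q x
        rw [Finset.sum_congr rfl hconst, Finset.sum_const, nsmul_eq_mul]
        rw [(CharP.cast_eq_zero_iff k p O.card).2 hpd, zero_mul]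
      have hrest : ∑ y ∈ s \ O, f y = 0 := by
        refine ih _ hOss (fun y hy => hfix y (Finset.mem_sdiff.1 hy).1) ?_
        intro q y hy
        rcases Finset.mem_sdiff.1 hy with ⟨hys, hyO⟩
        refine Finset.mem_sdiff.2 ⟨hstab q y hys, fun hqy => hyO ?_⟩
        rcases Finset.mem_image.1 hqy with ⟨r, -, hr⟩
        have : y = (q⁻¹ * r) • x := by
          rw [mul_smul, hr, inv_smul_smul]
        exact this ▸ Finset.mem_image.2 ⟨q⁻¹ * r, Finset.mem_univ _, rfl⟩
      rw [hsum, hOsum, hrest, add_zero]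

lemma mul_apply_univ {k : Type*} [Semiring k] {H : Type*} [Group H] [Fintype H] [DecidableEq H]
    (f g : MonoidAlgebra k H) (x : H) :
    (f * g).coeff x = ∑ y : H, f.coeff y * g.coeff (y⁻¹ * x) := by
  rw [MonoidAlgebra.coeff_mul_apply_left]
  rw [Finsupp.sum_fintype]
  · simp


/-- Let `G` be a finite group, `Q` a `p`-subgroup of `G`, and `k` a field of
characteristic `p`.  The Brauer map `br_Q : (kG)^Q → k C_G(Q)`, sending a `Q`-conjugation-fixed
element `a = Σ_g α_g g` to `Σ_{g ∈ C_G(Q)} α_g g` (i.e. the map characterised by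
`br a g = a g` for `g ∈ C_G(Q)`), is a surjective homomorphism of `k`-algebras; in particular
`br (a * a') = br a * br a'` for all `Q`-fixed `a, a'`. -/
theorem brauer_map_is_surjective_algebra_hom
    (p : ℕ) [Fact p.Prime] (k : Type*) [Field k] [CharP k p]
    (G : Type*) [Group G] [Fintype G] (Q : Subgroup G) (hQ : IsPGroup p Q)
    (br : MonoidAlgebra k G → MonoidAlgebra k ↥(Subgroup.centralizer (Q : Set G)))
    (hbr : ∀ (a : MonoidAlgebra k G) (g : ↥(Subgroup.centralizer (Q : Set G))),
      (br a).coeff g = a.coeff (g : G)) :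
    (∀ a a' : MonoidAlgebra k G,
        (∀ q ∈ Q, ∀ g : G, a.coeff (q * g * q⁻¹) = a.coeff g) →
        (∀ q ∈ Q, ∀ g : G, a'.coeff (q * g * q⁻¹) = a'.coeff g) →
        br (a * a') = br a * br a')
      ∧ (∀ a a' : MonoidAlgebra k G, br (a + a') = br a + br a')
      ∧ (∀ (r : k) (a : MonoidAlgebra k G), br (r • a) = r • br a)
      ∧ br 1 = 1
      ∧ (∀ c : MonoidAlgebra k ↥(Subgroup.centralizer (Q : Set G)),
          ∃ a : MonoidAlgebra k G,
            (∀ q ∈ Q, ∀ g : G, a.coeff (q * g * q⁻¹) = a.coeff g) ∧ br a = c) := by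
  classical
  have hcomm : ∀ q ∈ Q, ∀ x ∈ Subgroup.centralizer (Q : Set G), q * x * q⁻¹ = x := by
    intro q hq x hx
    have := (Subgroup.mem_centralizer_iff.1 hx) q hq
    rw [this, mul_inv_cancel_right]
  have hconjC : ∀ q ∈ Q, ∀ x : G,
      (q * x * q⁻¹ ∈ Subgroup.centralizer (Q : Set G) ↔ x ∈ Subgroup.centralizer (Q : Set G)) := by
    intro q hq x
    constructor
    · intro h
      have h2 := hcomm q hq _ h
      have hx : q * x * q⁻¹ = x := by
        calc q * x * q⁻¹ = q⁻¹ * (q * (q * x * q⁻¹) * q⁻¹) * q := by group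
          _ = q⁻¹ * (q * x * q⁻¹) * q := by rw [h2]
          _ = x := by group
      rwa [hx] at h
    · intro h
      rwa [hcomm q hq x h]
  set Q' : Subgroup (ConjAct G) := Q.map (ConjAct.toConjAct : G ≃* ConjAct G).toMonoidHom with hQ'
  have hQ'p : IsPGroup p Q' := hQ.map _
  have hsmul : ∀ (q' : Q') (x : G), ∃ q ∈ Q, q' • x = q * x * q⁻¹ := by
    rintro ⟨q', hq'⟩ x
    rcases Subgroup.mem_map.1 hq' with ⟨q, hq, rfl⟩
    exact ⟨q, hq, ConjAct.toConjAct_smul q x⟩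
  have hfixiff : ∀ x : G,
      x ∈ MulAction.fixedPoints Q' G ↔ x ∈ Subgroup.centralizer (Q : Set G) := by
    intro x
    constructor
    · intro h
      refine Subgroup.mem_centralizer_iff.2 fun q hq => ?_
      have h3 : ConjAct.toConjAct q • x = x :=
        h ⟨ConjAct.toConjAct q, Subgroup.mem_map.2 ⟨q, hq, rfl⟩⟩
      rw [ConjAct.toConjAct_smul] at h3
      calc q * x = (q * x * q⁻¹) * q := by group
        _ = x * q := by rw [h3]
    · intro h q'
      rcases hsmul q' x with ⟨q, hq, hs⟩
      rw [hs, hcomm q hq x h]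
  refine ⟨?_, ?_, ?_, ?_, ?_⟩
  · -- multiplicativity
    intro a a' ha ha'
    ext g
    rw [hbr, mul_apply_univ, mul_apply_univ]
    have hRHS : ∑ y : ↥(Subgroup.centralizer (Q : Set G)), (br a).coeff y * (br a').coeff (y⁻¹ * g) =
        ∑ y : ↥(Subgroup.centralizer (Q : Set G)), a.coeff (y : G) * a'.coeff ((y : G)⁻¹ * (g : G)) := by
      refine Finset.sum_congr rfl fun y _ => ?_
      rw [hbr, hbr]
      rfl
    rw [hRHS]
    have hsplit : ∑ y : G, a.coeff y * a'.coeff (y⁻¹ * (g : G)) =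
        (∑ y ∈ Finset.univ.filter (fun y => y ∈ Subgroup.centralizer (Q : Set G)),
          a.coeff y * a'.coeff (y⁻¹ * (g : G))) +
        ∑ y ∈ Finset.univ.filter (fun y => y ∉ Subgroup.centralizer (Q : Set G)),
          a.coeff y * a'.coeff (y⁻¹ * (g : G)) :=
      (Finset.sum_filter_add_sum_filter_not _ _ _).symm
    have hzero : ∑ y ∈ Finset.univ.filter (fun y => y ∉ Subgroup.centralizer (Q : Set G)),
        a.coeff y * a'.coeff (y⁻¹ * (g : G)) = 0 := by
      refine aux_sum_zero p hQ'p (fun y => a.coeff y * a'.coeff (y⁻¹ * (g : G))) ?_ _ ?_ ?_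
      · intro q' y
        rcases hsmul q' y with ⟨q, hq, hs⟩
        rw [hs]
        show a.coeff (q * y * q⁻¹) * a'.coeff ((q * y * q⁻¹)⁻¹ * (g : G)) = a.coeff y * a'.coeff (y⁻¹ * (g : G))
        have h1 : a.coeff (q * y * q⁻¹) = a.coeff y := ha q hq y
        have h2 : (q * y * q⁻¹)⁻¹ * (g : G) = q * (y⁻¹ * (g : G)) * q⁻¹ := by
          have hgc : q⁻¹ * (g : G) = (g : G) * q⁻¹ :=
            (Subgroup.mem_centralizer_iff.1 g.2) q⁻¹ (inv_mem hq)
          calc (q * y * q⁻¹)⁻¹ * (g : G) = q * y⁻¹ * (q⁻¹ * (g : G)) := by group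
            _ = q * y⁻¹ * ((g : G) * q⁻¹) := by rw [hgc]
            _ = q * (y⁻¹ * (g : G)) * q⁻¹ := by group
        rw [h1, h2, ha' q hq]
      · intro y hy
        rw [Finset.mem_filter] at hy
        rw [hfixiff]
        exact hy.2
      · intro q' y hy
        rw [Finset.mem_filter] at hy ⊢
        refine ⟨Finset.mem_univ _, ?_⟩
        rcases hsmul q' y with ⟨q, hq, hs⟩
        rw [hs]
        intro hmem
        exact hy.2 ((hconjC q hq y).1 hmem)
    have hsub : ∑ y ∈ Finset.univ.filter
          (fun y => y ∈ Subgroup.centralizer (Q : Set G)), a.coeff y * a'.coeff (y⁻¹ * (g : G)) =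
        ∑ y : ↥(Subgroup.centralizer (Q : Set G)), a.coeff (y : G) * a'.coeff ((y : G)⁻¹ * (g : G)) := by
      rw [Finset.sum_subtype (p := fun y => y ∈ Subgroup.centralizer (Q : Set G))
        (Finset.univ.filter (fun y => y ∈ Subgroup.centralizer (Q : Set G)))
        (fun y => by simp) (fun y => a.coeff y * a'.coeff (y⁻¹ * (g : G)))]
    rw [hsplit, hzero, add_zero, hsub]
  · intro a a'
    ext g
    have h1 : (br a + br a').coeff g = (br a).coeff g + (br a').coeff g := rfl
    rw [h1, hbr, hbr, hbr]
    rfl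
  · intro r a
    ext g
    have h1 : (r • br a).coeff g = r • (br a).coeff g := rfl
    rw [h1, hbr, hbr]
    rfl
  · ext g
    rw [hbr]
    rw [MonoidAlgebra.one_def, MonoidAlgebra.one_def, MonoidAlgebra.coeff_single,
      MonoidAlgebra.coeff_single, Finsupp.single_apply, Finsupp.single_apply]
    simp only [Subtype.ext_iff, Subgroup.coe_one]
  · intro c
    refine ⟨MonoidAlgebra.ofCoeff (Finsupp.mapDomain (fun x : ↥(Subgroup.centralizer (Q : Set G)) => (x : G)) c.coeff), ?_, ?_⟩
    · intro q hq g
      simp only [MonoidAlgebra.coeff_ofCoeff]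
      by_cases hg : g ∈ Subgroup.centralizer (Q : Set G)
      · rw [hcomm q hq g hg]
      · rw [Finsupp.mapDomain_notin_range, Finsupp.mapDomain_notin_range]
        · intro hr
          rcases hr with ⟨y, hy⟩
          exact hg (hy ▸ y.2)
        · intro hr
          rcases hr with ⟨y, hy⟩
          exact hg ((hconjC q hq g).1 (hy ▸ y.2))
    · ext g
      rw [hbr]
      exact Finsupp.mapDomain_apply Subtype.coe_injective c.coeff g
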